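/- A ring R is strongly virtually regular as a module over itself if and only if R is both a pp-ring (every principal ideal of R is projective) and a Bézout ring (every finitely generated ideal of R is principal). -/

import Mathlib

/-- A submodule is a direct summand if it has a complement. -/
def Submodule.IsDirectSummand {R M : Type*} [Ring R] [AddCommGroup M] [Module R M]
    (N : Submodule R M) : Prop :=
  ∃ N' : Submodule R M, IsCompl N N'

/-- A module is strongly virtually regular if every finitely generated submodule is
isomorphic to a direct summand. -/
def StronglyVirtuallyRegular (R M : Type*) [Ring R] [AddCommGroup M] [Module R M] : Prop :=
  ∀ A : Submodule R M, A.FG → ∃ N : Submodule R M, N.IsDirectSummand ∧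
    Nonempty (A ≃ₗ[R] N)

/-- `R` is strongly virtually regular as a module over itself iff `R` is a pp-ring
(every principal ideal is projective) and a Bézout ring (every finitely generated
ideal is principal). -/
theorem stronglyVirtuallyRegular_self_iff_pp_and_bezout {R : Type*} [Ring R] :
    StronglyVirtuallyRegular R R ↔
      (∀ a : R, Module.Projective R (Ideal.span {a})) ∧
        (∀ I : Ideal R, I.FG → I.IsPrincipal) := by
  constructor
  · intro h
    constructor
    · intro a
      obtain ⟨N, ⟨N', hc⟩, ⟨e⟩⟩ := h (Ideal.span {a}) (Submodule.fg_span_singleton a)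
      haveI hN : Module.Projective R N :=
        Module.Projective.of_split N.subtype (N.projectionOnto N' hc)
          (by ext x; simp)
      exact Module.Projective.of_equiv e.symm
    · intro I hI
      obtain ⟨N, ⟨N', hc⟩, ⟨e⟩⟩ := h I hI
      set p := N.projectionOnto N' hc with hp
      have hcyc : ∀ n : N, n = (n : R) • p 1 := by
        intro n
        have h1 : p ((n : R) • (1 : R)) = (n : R) • p 1 := map_smul p _ _
        have h2 : ((n : R) • (1 : R)) = (n : R) := by simp
        rw [h2] at h1
        rw [← h1, hp, Submodule.projectionOnto_apply_left hc n]
      set g : R := (e.symm (p 1) : R) with hgdef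
      have hgI : g ∈ I := (e.symm (p 1)).2
      have key : ∀ x : I, (x : R) = (e x : R) • g := by
        intro x
        have h1 : e x = (e x : R) • p 1 := hcyc (e x)
        have h2 : x = (e x : R) • e.symm (p 1) := by
          apply e.injective
          rw [map_smul, e.apply_symm_apply, ← h1]
        calc (x : R) = (((e x : R) • e.symm (p 1) : I) : R) := by rw [← h2]
        _ = (e x : R) • g := rfl
      refine ⟨⟨g, le_antisymm (fun x hx => ?_) ?_⟩⟩
      · rw [Submodule.mem_span_singleton]
        exact ⟨(e ⟨x, hx⟩ : R), (key ⟨x, hx⟩).symm⟩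
      · rw [Submodule.span_le, Set.singleton_subset_iff]
        exact hgI
  · rintro ⟨hpp, hbez⟩ A hA
    obtain ⟨a, rfl⟩ := (hbez A hA).principal
    haveI : Module.Projective R (Submodule.span R {a} : Submodule R R) := hpp a
    let π : R →ₗ[R] (Submodule.span R ({a} : Set R) : Submodule R R) :=
      { toFun := fun r => ⟨r • a, Submodule.smul_mem _ r (Submodule.mem_span_singleton_self a)⟩
        map_add' := fun x y => by ext; simp [add_mul]
        map_smul' := fun r x => by ext; simp [mul_assoc] }
    have hπ : Function.Surjective π := by
      rintro ⟨x, hx⟩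
      obtain ⟨r, hr⟩ := Submodule.mem_span_singleton.mp hx
      exact ⟨r, Subtype.ext hr⟩
    obtain ⟨s, hs⟩ := Module.projective_lifting_property π LinearMap.id hπ
    have hps : ∀ y, π (s y) = y := fun y => LinearMap.congr_fun hs y
    have hsinj : Function.Injective s := by
      intro x y hxy
      have := congrArg π hxy
      rwa [hps, hps] at this
    refine ⟨LinearMap.range s, ⟨LinearMap.ker π, ?_⟩, ⟨LinearEquiv.ofInjective s hsinj⟩⟩
    constructor
    · rw [disjoint_iff]
      ext x
      simp only [Submodule.mem_inf, Submodule.mem_bot, LinearMap.mem_range, LinearMap.mem_ker]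
      constructor
      · rintro ⟨⟨y, rfl⟩, hk⟩
        have : y = 0 := by rw [← hps y, hk]
        simp [this]
      · rintro rfl
        exact ⟨⟨0, by simp⟩, by simp⟩
    · rw [codisjoint_iff, eq_top_iff]
      intro x _
      have hk : x - s (π x) ∈ LinearMap.ker π := by
        rw [LinearMap.mem_ker, map_sub, hps, sub_self]
      exact Submodule.mem_sup.mpr ⟨s (π x), ⟨π x, rfl⟩, x - s (π x), hk, by abel⟩
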